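/- Let k, l ∈ ℕ, let H_0 be an infinite pairwise prime subset of ℕ, and let A be a (2l+1)-syndetic set such that there do NOT exist x, r ∈ ℕ and n ∈ H_0 with r ≡ 1 (mod n), x ∈ A and x·n^k·r ∈ A. Then there exists d ∈ [2, l] such that for every h ∈ ℕ, ({d}, h, l) is an A-Triveni triplet. -/

import Mathlib

/-- `A` is `l`-syndetic: it meets every block of `l` consecutive positive integers. -/
def SyndeticWith (A : Set ℕ) (l : ℕ) : Prop :=
  ∀ n : ℕ, 0 < n → ∃ m ∈ A, n ≤ m ∧ m < n + l

/-- `A` is syndetic if it is `l`-syndetic for some positive integer `l`. -/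
def Syndetic (A : Set ℕ) : Prop :=
  ∃ l : ℕ, 0 < l ∧ SyndeticWith A l

/-- A pairwise prime subset of the positive integers. -/
def PairwisePrimeSet (B : Set ℕ) : Prop :=
  (∀ x ∈ B, 0 < x) ∧ ∀ a ∈ B, ∀ b ∈ B, a ≠ b → Nat.Coprime a b

/-- `r(p,l)`: the largest `t` with `p ^ t ≤ 2 * l + 1`. -/
def rpl (p l : ℕ) : ℕ := Nat.findGreatest (fun t => p ^ t ≤ 2 * l + 1) (2 * l + 1)

/-- `T(l)`: products `∏_{p prime, p ≤ 2l+1} p ^ (r_p)` with `0 ≤ r_p ≤ r(p,l)`. -/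
def Tset (l : ℕ) : Set ℕ :=
  {m | ∃ r : ℕ → ℕ, (∀ p, r p ≤ rpl p l) ∧
    m = ∏ p ∈ (Finset.range (2 * l + 2)).filter Nat.Prime, p ^ r p}

/-- `(F, h, l)` is a Triveni triplet with respect to `A`. -/
def TriveniTriplet (A F : Set ℕ) (h l : ℕ) : Prop :=
  F ⊆ Tset l \ {1} ∧
  ∃ B : ℕ → Set ℕ,
    (∀ u ∈ F, PairwisePrimeSet (B u) ∧ (B u).ncard = h ∧ ∀ x ∈ B u, u * x ∈ A) ∧
    (∀ u ∈ F, ∀ v ∈ F, u ≠ v → ∀ x ∈ B u, ∀ y ∈ B v, Nat.Coprime x y)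

lemma adj_coprime {c y z : ℕ} (hz : z ∣ c) (h : y + 1 = c ∨ y = c + 1) :
    Nat.Coprime y z := by
  have hgy := Nat.gcd_dvd_left y z
  have hgc : Nat.gcd y z ∣ c := (Nat.gcd_dvd_right y z).trans hz
  rcases h with h | h
  · have : Nat.gcd y z ∣ 1 := by
      have := Nat.dvd_sub hgc hgy
      rwa [← h, Nat.add_sub_cancel_left] at this
    exact Nat.dvd_one.mp this
  · have : Nat.gcd y z ∣ 1 := by
      have h2 : Nat.gcd y z ∣ c + 1 := h ▸ hgy
      have := Nat.dvd_sub h2 hgc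
      rwa [Nat.add_sub_cancel_left] at this
    exact Nat.dvd_one.mp this

lemma coprime_of_two {a b : ℕ} (h2 : Nat.Coprime a 2) (h : Nat.gcd a b ∣ 2) :
    Nat.Coprime a b :=
  Nat.dvd_one.mp (h2 ▸ Nat.dvd_gcd (Nat.gcd_dvd_left a b) h)

lemma exists_inverse {X M : ℕ} (h : Nat.Coprime X M) (hM : 1 < M) :
    ∃ u, X * u ≡ 1 [MOD M] := by
  obtain ⟨u, -, hu⟩ := Nat.exists_mul_mod_eq_one_of_coprime h hM
  exact ⟨u, by show X * u % M = 1 % M; rw [hu, Nat.mod_eq_of_lt hM]⟩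

lemma extract_rep {c t M : ℕ} (h : c ≡ t [MOD M]) (ht : t < M) :
    ∃ q, c = M * q + t := by
  have h1 : c % M = t := by
    rw [Nat.ModEq] at h
    rw [h, Nat.mod_eq_of_lt ht]
  exact ⟨c / M, by rw [← h1]; exact (Nat.div_add_mod c M).symm⟩

lemma add_mul_modeq {m M t d : ℕ} (h : d ∣ M) : m + M * t ≡ m [MOD d] := by
  have h1 : M * t ≡ 0 [MOD d] := (Nat.modEq_zero_iff_dvd).mpr (h.mul_right t)
  simpa using (Nat.ModEq.add_left m h1)

lemma pick_H0 {H0 : Set ℕ} (hinf : H0.Infinite) (hpp : PairwisePrimeSet H0)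
    (N : ℕ) (hN : 0 < N) (E : Finset ℕ) :
    ∃ n ∈ H0, 2 ≤ n ∧ Nat.Coprime n N ∧ n ∉ E := by
  classical
  set S : Set ℕ := {n | n ∈ H0 ∧ ¬ Nat.Coprime n N} with hS
  have hSfin : S.Finite := by
    have hsub : S ⊆ ⋃ p ∈ N.primeFactors, {n : ℕ | n ∈ H0 ∧ p ∣ n} := by
      rintro n ⟨hn, hcop⟩
      have hg1 : Nat.gcd n N ≠ 1 := hcop
      set p := (Nat.gcd n N).minFac with hp
      have hpp' : p.Prime := Nat.minFac_prime hg1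
      have hpn : p ∣ n := (Nat.minFac_dvd _).trans (Nat.gcd_dvd_left n N)
      have hpN : p ∣ N := (Nat.minFac_dvd _).trans (Nat.gcd_dvd_right n N)
      exact Set.mem_biUnion (Nat.mem_primeFactors.mpr ⟨hpp', hpN, hN.ne'⟩) ⟨hn, hpn⟩
    refine Set.Finite.subset (Set.Finite.biUnion N.primeFactors.finite_toSet
      (fun p hp => ?_)) hsub
    apply Set.Subsingleton.finite
    rintro a ⟨haH, hpa⟩ b ⟨hbH, hpb⟩
    by_contra hab
    have hcop := hpp.2 a haH b hbH hab
    have hd1 : p ∣ 1 := hcop ▸ Nat.dvd_gcd hpa hpb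
    have hp2 := (Nat.prime_of_mem_primeFactors hp).two_le
    have := Nat.dvd_one.mp hd1
    omega
  have hinf2 : (H0 \ (S ∪ ↑E ∪ {1} : Set ℕ)).Infinite :=
    hinf.diff ((hSfin.union E.finite_toSet).union (Set.finite_singleton 1))
  obtain ⟨n, hnH, hnot2⟩ := hinf2.nonempty
  simp only [Set.mem_union, Set.mem_singleton_iff, Finset.mem_coe, not_or] at hnot2
  obtain ⟨⟨hnS, hnE⟩, hn1⟩ := hnot2
  have hcop : Nat.Coprime n N := by
    by_contra hc; exact hnS ⟨hnH, hc⟩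
  have hpos := hpp.1 n hnH
  exact ⟨n, hnH, by omega, hcop, hnE⟩

lemma mem_Tset {l d : ℕ} (hd : 0 < d) (hdl : d ≤ 2 * l + 1) : d ∈ Tset l := by
  classical
  have hbound : ∀ p, d.factorization p ≤ rpl p l := by
    intro p
    by_cases hp : d.factorization p = 0
    · rw [hp]; exact Nat.zero_le _
    · have hpprime : p.Prime := Nat.prime_of_mem_primeFactors
        (by rw [← Nat.support_factorization]; exact Finsupp.mem_support_iff.mpr hp)
      have h1 : p ^ d.factorization p ≤ d := Nat.ordProj_le p hd.ne'
      have h2 : d.factorization p < p ^ d.factorization p :=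
        Nat.lt_pow_self hpprime.one_lt
      exact Nat.le_findGreatest (by omega) (by omega)
  have heq : d = ∏ p ∈ (Finset.range (2 * l + 2)).filter Nat.Prime,
      p ^ d.factorization p := by
    conv_lhs => rw [← Nat.factorization_prod_pow_eq_self hd.ne']
    rw [Finsupp.prod]
    apply Finset.prod_subset
    · intro p hp
      rw [Nat.support_factorization] at hp
      obtain ⟨hpp, hpd, -⟩ := Nat.mem_primeFactors.mp hp
      have := Nat.le_of_dvd hd hpd
      exact Finset.mem_filter.mpr ⟨Finset.mem_range.mpr (by omega), hpp⟩
    · intro p hp hns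
      rw [Nat.support_factorization] at hns
      have : d.factorization p = 0 := by
        rw [← Nat.support_factorization] at hns
        exact Finsupp.notMem_support_iff.mp (by rwa [Nat.support_factorization] at hns ⊢)
      rw [this, pow_zero]
  exact ⟨fun p => d.factorization p, hbound, heq⟩

lemma good_out {A : Set ℕ} {l L P T c : ℕ} (hl : 0 < l)
    (hLd : ∀ e, 2 ≤ e → e ≤ l → e ∣ L)
    (hc : L * L * P ∣ c) (hsz : l * (T + 2) ≤ c)
    (a : ℕ) (ha : a ∈ A) (e : ℕ) (he2 : 2 ≤ e) (hel : e ≤ l)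
    (hae : a = c + e ∨ a + e = c) :
    ∃ d b, 2 ≤ d ∧ d ≤ l ∧ T < b ∧ d * b ∈ A ∧ Nat.Coprime b (L * P) := by
  have heL : e ∣ L := hLd e he2 hel
  obtain ⟨L₁, hL₁⟩ := heL
  obtain ⟨w, hw⟩ := hc
  have hepos : 0 < e := by omega
  have hce : c / e = L₁ * L * P * w := by
    have : c = e * (L₁ * L * P * w) := by rw [hw, hL₁]; ring
    rw [this, Nat.mul_div_cancel_left _ hepos]
  have hec : e ∣ c := ⟨L₁ * L * P * w, by rw [hw, hL₁]; ring⟩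
  have hLP : L * P ∣ c / e := ⟨L₁ * w, by rw [hce]; ring⟩
  have hdiv1 : T + 2 ≤ c / l := by
    rw [Nat.le_div_iff_mul_le hl, mul_comm]; exact hsz
  have hdiv : T + 2 ≤ c / e := le_trans hdiv1 (Nat.div_le_div_left hel hepos)
  rcases hae with h | h
  · refine ⟨e, c / e + 1, he2, hel, by omega, ?_, adj_coprime hLP (Or.inr rfl)⟩
    have : e * (c / e + 1) = a := by
      rw [Nat.mul_add, Nat.mul_div_cancel' hec, mul_one, h]
    rwa [this]
  · refine ⟨e, c / e - 1, he2, hel, by omega, ?_, adj_coprime hLP (Or.inl (by omega))⟩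
    have h1 : e * (c / e - 1 + 1) = c := by
      rw [Nat.sub_add_cancel (by omega), Nat.mul_div_cancel' hec]
    have h2 : e * (c / e - 1) + e = c := by
      calc e * (c / e - 1) + e = e * (c / e - 1 + 1) := by ring
        _ = c := h1
    have : e * (c / e - 1) = a := by omega
    rwa [this]

lemma step {k l L : ℕ} (hk : 0 < k) (hl : 0 < l)
    (hL2 : 2 ∣ L) (hLpos : 0 < L) (hLd : ∀ e, 2 ≤ e → e ≤ l → e ∣ L)
    {H0 : Set ℕ} (hH0inf : H0.Infinite) (hH0 : PairwisePrimeSet H0)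
    {A : Set ℕ} (hA : SyndeticWith A (2 * l + 1))
    (hnot : ¬∃ x r n : ℕ, n ∈ H0 ∧ 0 < r ∧ r ≡ 1 [MOD n] ∧
      x ∈ A ∧ x * n ^ k * r ∈ A)
    (P T : ℕ) (hP : 0 < P) :
    ∃ d b, 2 ≤ d ∧ d ≤ l ∧ T < b ∧ d * b ∈ A ∧ Nat.Coprime b (L * P) := by
  classical
  set Q := L * L * P with hQdef
  have hQpos : 0 < Q := by positivity
  have hLQ : L ∣ Q := ⟨L * P, by ring⟩
  have hPQ : P ∣ Q := ⟨L * L, by ring⟩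
  have h2Q : 2 ∣ Q := hL2.trans hLQ
  -- x₀
  obtain ⟨x₀, hx₀A, hx₀1, -⟩ := hA 1 one_pos
  have hx₀pos : 0 < x₀ := hx₀1
  -- n₀
  obtain ⟨n₀, hn₀H0, hn₀2, hn₀cop, -⟩ := pick_H0 hH0inf hH0 (L * (P * x₀))
    (by positivity) ∅
  have hn₀L : Nat.Coprime n₀ L := hn₀cop.coprime_dvd_right ⟨P * x₀, rfl⟩
  have hn₀P : Nat.Coprime n₀ P := hn₀cop.coprime_dvd_right ⟨L * x₀, by ring⟩
  have hn₀x₀ : Nat.Coprime n₀ x₀ := hn₀cop.coprime_dvd_right ⟨L * P, by ring⟩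
  have hQn₀ : Nat.Coprime Q n₀ := ((hn₀L.symm.mul hn₀L.symm).mul hn₀P.symm)
  -- u₀ : inverse of Q mod n₀
  obtain ⟨u₀, hu₀⟩ := exists_inverse hQn₀ (by omega)
  -- size bound
  set B := l * (T + 2) + l + 2 with hBdef
  have hBl : l + 2 ≤ B := by omega
  -- stage 1 center
  set r₁ := Q * (u₀ + n₀ * B) with hr₁def
  set c₁ := x₀ * n₀ ^ k * r₁ with hc₁def
  have hn₀kpos : 0 < n₀ ^ k := pow_pos (by omega) k
  have hr₁B : B ≤ r₁ := by
    calc B ≤ n₀ * B := Nat.le_mul_of_pos_left B (by omega)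
      _ ≤ u₀ + n₀ * B := by omega
      _ ≤ Q * (u₀ + n₀ * B) := Nat.le_mul_of_pos_left _ hQpos
  have hc₁B : B ≤ c₁ := le_trans hr₁B (Nat.le_mul_of_pos_left _ (by positivity))
  have hr₁pos : 0 < r₁ := by omega
  have hr₁mod : r₁ ≡ 1 [MOD n₀] := by
    have h1 : (u₀ + n₀ * B) ≡ u₀ [MOD n₀] := by
      show (u₀ + n₀ * B) % n₀ = u₀ % n₀
      simp [Nat.add_mul_mod_self_left]
    exact (Nat.ModEq.mul_left Q h1).trans hu₀
  have hc₁notA : c₁ ∉ A := fun h =>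
    hnot ⟨x₀, r₁, n₀, hn₀H0, hr₁pos, hr₁mod, hx₀A, h⟩
  have hQc₁ : Q ∣ c₁ := ⟨x₀ * n₀ ^ k * (u₀ + n₀ * B), by rw [hc₁def, hr₁def]; ring⟩
  have hx₀c₁ : x₀ ∣ c₁ := ⟨n₀ ^ k * r₁, by rw [hc₁def]; ring⟩
  have hn₀c₁ : n₀ ∣ c₁ := ⟨x₀ * n₀ ^ (k-1) * r₁, by
    rw [hc₁def]
    have : n₀ ^ k = n₀ * n₀ ^ (k - 1) := by
      rw [← pow_succ']
      congr 1
      omega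
    rw [this]; ring⟩
  -- window around c₁
  obtain ⟨a₁, ha₁A, ha₁lb, ha₁ub⟩ := hA (c₁ - l) (by omega)
  have ha₁ub' : a₁ ≤ c₁ + l := by omega
  have ha₁lb' : c₁ - l ≤ a₁ := ha₁lb
  by_cases hgood : ∃ a ∈ A, ∃ e, 2 ≤ e ∧ e ≤ l ∧ (a = c₁ + e ∨ a + e = c₁)
  · obtain ⟨a, ha, e, h1, h2, h3⟩ := hgood
    exact good_out hl hLd hQc₁ (by omega) a ha e h1 h2 h3
  -- bad case: get y
  have hy : a₁ + 1 = c₁ ∨ a₁ = c₁ + 1 := by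
    have hne : a₁ ≠ c₁ := fun h => hc₁notA (h ▸ ha₁A)
    by_contra hcon
    push_neg at hcon
    rcases (by omega : a₁ + 2 ≤ c₁ ∨ c₁ + 2 ≤ a₁) with h | h
    · exact hgood ⟨a₁, ha₁A, c₁ - a₁, by omega, by omega, Or.inr (by omega)⟩
    · exact hgood ⟨a₁, ha₁A, a₁ - c₁, by omega, by omega, Or.inl (by omega)⟩
  set y := a₁ with hydef
  have hyA : y ∈ A := ha₁A
  have hypos : 0 < y := by omega
  have hyQ : Nat.Coprime y Q := adj_coprime hQc₁ hy
  have hyL : Nat.Coprime y L := adj_coprime (hLQ.trans hQc₁) hy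
  have hyP : Nat.Coprime y P := adj_coprime (hPQ.trans hQc₁) hy
  have hyx₀ : Nat.Coprime y x₀ := adj_coprime hx₀c₁ hy
  have hyn₀ : Nat.Coprime y n₀ := adj_coprime hn₀c₁ hy
  have hy2 : Nat.Coprime y 2 := adj_coprime (h2Q.trans hQc₁) hy
  -- n₁
  obtain ⟨n₁, hn₁H0, hn₁2, hn₁cop, hn₁E⟩ := pick_H0 hH0inf hH0 (L * (P * (x₀ * y)))
    (by positivity) {n₀}
  have hn₁L : Nat.Coprime n₁ L := hn₁cop.coprime_dvd_right ⟨P * (x₀ * y), rfl⟩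
  have hn₁P : Nat.Coprime n₁ P := hn₁cop.coprime_dvd_right ⟨L * (x₀ * y), by ring⟩
  have hn₁x₀ : Nat.Coprime n₁ x₀ := hn₁cop.coprime_dvd_right ⟨L * (P * y), by ring⟩
  have hn₁y : Nat.Coprime n₁ y := hn₁cop.coprime_dvd_right ⟨L * (P * x₀), by ring⟩
  have hn₀n₁ : Nat.Coprime n₀ n₁ := hH0.2 n₀ hn₀H0 n₁ hn₁H0
    (fun h => hn₁E (by simp [h]))
  have hn₁two : Nat.Coprime n₁ 2 := hn₁L.coprime_dvd_right hL2
  have hQn₁ : Nat.Coprime Q n₁ := ((hn₁L.symm.mul hn₁L.symm).mul hn₁P.symm)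
  set M₁ := y * n₁ ^ (k + 1) with hM₁def
  have hn₁k : 2 ≤ n₁ ^ k := le_trans hn₁2 (Nat.le_self_pow hk.ne' n₁)
  have hn₁k1 : 2 ≤ n₁ ^ (k + 1) := le_trans hn₁2 (Nat.le_self_pow (by omega) n₁)
  have hM₁1 : 1 < M₁ := by
    calc 1 < 2 := one_lt_two
      _ ≤ n₁ ^ (k + 1) := hn₁k1
      _ = 1 * n₁ ^ (k + 1) := (one_mul _).symm
      _ ≤ y * n₁ ^ (k + 1) := Nat.mul_le_mul_right _ hypos
  set X := x₀ * n₀ ^ k * Q with hXdef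
  have hXpos : 0 < X := by positivity
  have hXM₁ : Nat.Coprime X M₁ := by
    have c1 : Nat.Coprime x₀ M₁ :=
      (hyx₀.symm).mul_right ((hn₁x₀.symm).pow_right _)
    have c2 : Nat.Coprime (n₀ ^ k) M₁ :=
      ((hyn₀.symm).mul_right ((hn₀n₁).pow_right _)).pow_left _
    have c3 : Nat.Coprime Q M₁ :=
      (hyQ.symm).mul_right ((hQn₁).pow_right _)
    exact (c1.mul c2).mul c3
  have hn₀M₁ : Nat.Coprime n₀ M₁ :=
    (hyn₀.symm).mul_right ((hn₀n₁).pow_right _)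
  obtain ⟨u₁, hu₁⟩ := exists_inverse hXM₁ hM₁1
  set t₁ := u₁ * (1 + y * n₁ ^ k) with ht₁def
  -- CRT for stage 2
  obtain ⟨m₂', hm₂'⟩ := Nat.chineseRemainder hn₀M₁ u₀ t₁
  set m₂ := m₂' + n₀ * M₁ * B with hm₂def
  have hm₂n₀ : m₂ ≡ u₀ [MOD n₀] :=
    (add_mul_modeq ⟨M₁, rfl⟩).trans hm₂'.1
  have hm₂M₁ : m₂ ≡ t₁ [MOD M₁] :=
    (add_mul_modeq ⟨n₀, by ring⟩).trans hm₂'.2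
  have hm₂B : B ≤ m₂ := by
    have : B ≤ n₀ * M₁ * B := Nat.le_mul_of_pos_left B (by positivity)
    omega
  set c₂ := X * m₂ with hc₂def
  have hc₂B : B ≤ c₂ := le_trans hm₂B (Nat.le_mul_of_pos_left _ hXpos)
  have hr₂mod : Q * m₂ ≡ 1 [MOD n₀] := (Nat.ModEq.mul_left Q hm₂n₀).trans hu₀
  have hc₂notA : c₂ ∉ A := fun h => hnot ⟨x₀, Q * m₂, n₀, hn₀H0, by positivity,
    hr₂mod, hx₀A, by rwa [show x₀ * n₀ ^ k * (Q * m₂) = c₂ by rw [hc₂def, hXdef]; ring]⟩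
  have hQc₂ : Q ∣ c₂ := ⟨x₀ * n₀ ^ k * m₂, by rw [hc₂def, hXdef]; ring⟩
  have hx₀c₂ : x₀ ∣ c₂ := ⟨n₀ ^ k * Q * m₂, by rw [hc₂def, hXdef]; ring⟩
  have hn₀c₂ : n₀ ∣ c₂ := ⟨x₀ * n₀ ^ (k-1) * Q * m₂, by
    rw [hc₂def, hXdef]
    have : n₀ ^ k = n₀ * n₀ ^ (k - 1) := by
      rw [← pow_succ']; congr 1; omega
    rw [this]; ring⟩
  -- c₂ - 1 is killed
  have hc₂M₁ : c₂ ≡ 1 + y * n₁ ^ k [MOD M₁] := by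
    calc c₂ = X * m₂ := rfl
      _ ≡ X * t₁ [MOD M₁] := Nat.ModEq.mul_left X hm₂M₁
      _ = (X * u₁) * (1 + y * n₁ ^ k) := by rw [ht₁def]; ring
      _ ≡ 1 * (1 + y * n₁ ^ k) [MOD M₁] := Nat.ModEq.mul_right _ hu₁
      _ = 1 + y * n₁ ^ k := one_mul _
  have hyn₁k2 : 2 ≤ y * n₁ ^ k := by
    calc 2 ≤ n₁ ^ k := hn₁k
      _ = 1 * n₁ ^ k := (one_mul _).symm
      _ ≤ y * n₁ ^ k := Nat.mul_le_mul_right _ hypos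
  have hlt₁ : 1 + y * n₁ ^ k < M₁ := by
    have h1 : M₁ = y * n₁ ^ k * n₁ := by rw [hM₁def, pow_succ]; ring
    have h2 : y * n₁ ^ k * 2 ≤ y * n₁ ^ k * n₁ := Nat.mul_le_mul_left _ hn₁2
    omega
  obtain ⟨q₁, hq₁⟩ := extract_rep hc₂M₁ hlt₁
  have hc₂m1 : c₂ - 1 = y * n₁ ^ k * (n₁ * q₁ + 1) := by
    have h3 : c₂ = y * n₁ ^ k * n₁ * q₁ + 1 + y * n₁ ^ k := by
      rw [hq₁, hM₁def, pow_succ]; ring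
    have h4 : y * n₁ ^ k * (n₁ * q₁ + 1) = y * n₁ ^ k * n₁ * q₁ + y * n₁ ^ k := by
      ring
    omega
  have hydvdc₂1 : y ∣ c₂ - 1 := ⟨n₁ ^ k * (n₁ * q₁ + 1), by rw [hc₂m1]; ring⟩
  have hn₁dvdc₂1 : n₁ ∣ c₂ - 1 := ⟨y * n₁ ^ (k-1) * (n₁ * q₁ + 1), by
    rw [hc₂m1]
    have : n₁ ^ k = n₁ * n₁ ^ (k - 1) := by
      rw [← pow_succ']; congr 1; omega
    rw [this]; ring⟩
  have hc₂m1notA : c₂ - 1 ∉ A := fun h => hnot ⟨y, n₁ * q₁ + 1, n₁, hn₁H0,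
    by omega, by show (n₁ * q₁ + 1) % n₁ = 1 % n₁; exact Nat.mul_add_mod n₁ q₁ 1,
    hyA, by rwa [← hc₂m1]⟩
  -- window around c₂
  obtain ⟨a₂, ha₂A, ha₂lb, ha₂ub⟩ := hA (c₂ - l) (by omega)
  by_cases hgood₂ : ∃ a ∈ A, ∃ e, 2 ≤ e ∧ e ≤ l ∧ (a = c₂ + e ∨ a + e = c₂)
  · obtain ⟨a, ha, e, h1, h2, h3⟩ := hgood₂
    exact good_out hl hLd hQc₂ (by omega) a ha e h1 h2 h3
  have hy' : a₂ = c₂ + 1 := by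
    have hne : a₂ ≠ c₂ := fun h => hc₂notA (h ▸ ha₂A)
    have hne1 : a₂ + 1 ≠ c₂ := fun h => hc₂m1notA (by
      have : a₂ = c₂ - 1 := by omega
      exact this ▸ ha₂A)
    by_contra hcon
    rcases (by omega : a₂ + 2 ≤ c₂ ∨ c₂ + 2 ≤ a₂) with h | h
    · exact hgood₂ ⟨a₂, ha₂A, c₂ - a₂, by omega, by omega, Or.inr (by omega)⟩
    · exact hgood₂ ⟨a₂, ha₂A, a₂ - c₂, by omega, by omega, Or.inl (by omega)⟩
  set y' := a₂ with hy'def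
  have hy'A : y' ∈ A := ha₂A
  have hy'pos : 0 < y' := by omega
  have hy'eq : y' + 1 = c₂ ∨ y' = c₂ + 1 := Or.inr hy'
  have hy'Q : Nat.Coprime y' Q := adj_coprime hQc₂ hy'eq
  have hy'L : Nat.Coprime y' L := adj_coprime (hLQ.trans hQc₂) hy'eq
  have hy'P : Nat.Coprime y' P := adj_coprime (hPQ.trans hQc₂) hy'eq
  have hy'x₀ : Nat.Coprime y' x₀ := adj_coprime hx₀c₂ hy'eq
  have hy'n₀ : Nat.Coprime y' n₀ := adj_coprime hn₀c₂ hy'eq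
  have hy'2 : Nat.Coprime y' 2 := adj_coprime (h2Q.trans hQc₂) hy'eq
  -- y' coprime to y and n₁
  have hgcd2 : ∀ z : ℕ, z ∣ c₂ - 1 → Nat.gcd z y' ∣ 2 := by
    intro z hz
    have h1 : Nat.gcd z y' ∣ c₂ - 1 := (Nat.gcd_dvd_left z y').trans hz
    have h2 : Nat.gcd z y' ∣ c₂ + 1 := hy' ▸ Nat.gcd_dvd_right z y'
    have h3 := Nat.dvd_sub h2 h1
    rwa [show c₂ + 1 - (c₂ - 1) = 2 by omega] at h3
  have hyy' : Nat.Coprime y y' := coprime_of_two hy2 (hgcd2 y hydvdc₂1)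
  have hn₁y' : Nat.Coprime n₁ y' := coprime_of_two hn₁two (hgcd2 n₁ hn₁dvdc₂1)
  -- n₂
  obtain ⟨n₂, hn₂H0, hn₂2, hn₂cop, hn₂E⟩ := pick_H0 hH0inf hH0
    (L * (P * (x₀ * (y * y')))) (by positivity) {n₀, n₁}
  have hn₂L : Nat.Coprime n₂ L := hn₂cop.coprime_dvd_right ⟨P * (x₀ * (y * y')), rfl⟩
  have hn₂P : Nat.Coprime n₂ P := hn₂cop.coprime_dvd_right ⟨L * (x₀ * (y * y')), by ring⟩
  have hn₂x₀ : Nat.Coprime n₂ x₀ := hn₂cop.coprime_dvd_right ⟨L * (P * (y * y')), by ring⟩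
  have hn₂y : Nat.Coprime n₂ y := hn₂cop.coprime_dvd_right ⟨L * (P * (x₀ * y')), by ring⟩
  have hn₂y' : Nat.Coprime n₂ y' := hn₂cop.coprime_dvd_right ⟨L * (P * (x₀ * y)), by ring⟩
  have hn₀n₂ : Nat.Coprime n₀ n₂ := hH0.2 n₀ hn₀H0 n₂ hn₂H0
    (fun h => hn₂E (by simp [h]))
  have hn₁n₂ : Nat.Coprime n₁ n₂ := hH0.2 n₁ hn₁H0 n₂ hn₂H0
    (fun h => hn₂E (by simp [h]))
  have hQn₂ : Nat.Coprime Q n₂ := ((hn₂L.symm.mul hn₂L.symm).mul hn₂P.symm)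
  set M₂ := y' * n₂ ^ (k + 1) with hM₂def
  have hn₂k : 2 ≤ n₂ ^ k := le_trans hn₂2 (Nat.le_self_pow hk.ne' n₂)
  have hn₂k1 : 2 ≤ n₂ ^ (k + 1) := le_trans hn₂2 (Nat.le_self_pow (by omega) n₂)
  have hM₂1 : 1 < M₂ := by
    calc 1 < 2 := one_lt_two
      _ ≤ n₂ ^ (k + 1) := hn₂k1
      _ = 1 * n₂ ^ (k + 1) := (one_mul _).symm
      _ ≤ y' * n₂ ^ (k + 1) := Nat.mul_le_mul_right _ hy'pos
  have hXM₂ : Nat.Coprime X M₂ := by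
    have c1 : Nat.Coprime x₀ M₂ :=
      (hy'x₀.symm).mul_right ((hn₂x₀.symm).pow_right _)
    have c2 : Nat.Coprime (n₀ ^ k) M₂ :=
      ((hy'n₀.symm).mul_right ((hn₀n₂).pow_right _)).pow_left _
    have c3 : Nat.Coprime Q M₂ :=
      (hy'Q.symm).mul_right ((hQn₂).pow_right _)
    exact (c1.mul c2).mul c3
  have hn₀M₂ : Nat.Coprime n₀ M₂ :=
    (hy'n₀.symm).mul_right ((hn₀n₂).pow_right _)
  have hM₁M₂ : Nat.Coprime M₁ M₂ := by
    have c1 : Nat.Coprime y M₂ := hyy'.mul_right ((hn₂y.symm).pow_right _)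
    have c2 : Nat.Coprime (n₁ ^ (k+1)) M₂ :=
      (hn₁y'.mul_right ((hn₁n₂).pow_right _)).pow_left _
    exact c1.mul c2
  obtain ⟨u₂, hu₂⟩ := exists_inverse hXM₂ hM₂1
  set t₂ := u₂ * (y' * n₂ ^ k - 1) with ht₂def
  have hy'n₂k2 : 2 ≤ y' * n₂ ^ k := by
    calc 2 ≤ n₂ ^ k := hn₂k
      _ = 1 * n₂ ^ k := (one_mul _).symm
      _ ≤ y' * n₂ ^ k := Nat.mul_le_mul_right _ hy'pos
  -- CRT for stage 3
  obtain ⟨w, hw₁, hw₂⟩ := Nat.chineseRemainder hM₁M₂ t₁ t₂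
  obtain ⟨m₃', hm₃'⟩ := Nat.chineseRemainder (hn₀M₁.mul_right hn₀M₂) u₀ w
  set m₃ := m₃' + n₀ * (M₁ * M₂) * B with hm₃def
  have hm₃n₀ : m₃ ≡ u₀ [MOD n₀] :=
    (add_mul_modeq ⟨M₁ * M₂, rfl⟩).trans hm₃'.1
  have hm₃M₁ : m₃ ≡ t₁ [MOD M₁] :=
    (((add_mul_modeq ⟨n₀, by ring⟩).trans hm₃'.2).of_dvd
      ⟨M₂, rfl⟩).trans (hw₁.of_dvd (dvd_refl M₁))
  have hm₃M₂ : m₃ ≡ t₂ [MOD M₂] :=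
    (((add_mul_modeq ⟨n₀, by ring⟩).trans hm₃'.2).of_dvd
      ⟨M₁, by ring⟩).trans hw₂
  have hm₃B : B ≤ m₃ := by
    have : B ≤ n₀ * (M₁ * M₂) * B := Nat.le_mul_of_pos_left B (by positivity)
    omega
  set c₃ := X * m₃ with hc₃def
  have hc₃B : B ≤ c₃ := le_trans hm₃B (Nat.le_mul_of_pos_left _ hXpos)
  -- kill c₃
  have hr₃mod : Q * m₃ ≡ 1 [MOD n₀] := (Nat.ModEq.mul_left Q hm₃n₀).trans hu₀
  have hc₃notA : c₃ ∉ A := fun h => hnot ⟨x₀, Q * m₃, n₀, hn₀H0, by positivity,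
    hr₃mod, hx₀A, by rwa [show x₀ * n₀ ^ k * (Q * m₃) = c₃ by rw [hc₃def, hXdef]; ring]⟩
  have hQc₃ : Q ∣ c₃ := ⟨x₀ * n₀ ^ k * m₃, by rw [hc₃def, hXdef]; ring⟩
  -- kill c₃ - 1
  have hc₃M₁ : c₃ ≡ 1 + y * n₁ ^ k [MOD M₁] := by
    calc c₃ = X * m₃ := rfl
      _ ≡ X * t₁ [MOD M₁] := Nat.ModEq.mul_left X hm₃M₁
      _ = (X * u₁) * (1 + y * n₁ ^ k) := by rw [ht₁def]; ring
      _ ≡ 1 * (1 + y * n₁ ^ k) [MOD M₁] := Nat.ModEq.mul_right _ hu₁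
      _ = 1 + y * n₁ ^ k := one_mul _
  obtain ⟨q₃, hq₃⟩ := extract_rep hc₃M₁ hlt₁
  have hc₃m1 : c₃ - 1 = y * n₁ ^ k * (n₁ * q₃ + 1) := by
    have h3 : c₃ = y * n₁ ^ k * n₁ * q₃ + 1 + y * n₁ ^ k := by
      rw [hq₃, hM₁def, pow_succ]; ring
    have h4 : y * n₁ ^ k * (n₁ * q₃ + 1) = y * n₁ ^ k * n₁ * q₃ + y * n₁ ^ k := by
      ring
    omega
  have hc₃m1notA : c₃ - 1 ∉ A := fun h => hnot ⟨y, n₁ * q₃ + 1, n₁, hn₁H0,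
    by omega, by show (n₁ * q₃ + 1) % n₁ = 1 % n₁; exact Nat.mul_add_mod n₁ q₃ 1,
    hyA, by rwa [← hc₃m1]⟩
  -- kill c₃ + 1
  have hc₃M₂ : c₃ ≡ y' * n₂ ^ k - 1 [MOD M₂] := by
    calc c₃ = X * m₃ := rfl
      _ ≡ X * t₂ [MOD M₂] := Nat.ModEq.mul_left X hm₃M₂
      _ = (X * u₂) * (y' * n₂ ^ k - 1) := by rw [ht₂def]; ring
      _ ≡ 1 * (y' * n₂ ^ k - 1) [MOD M₂] := Nat.ModEq.mul_right _ hu₂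
      _ = y' * n₂ ^ k - 1 := one_mul _
  have hlt₂ : y' * n₂ ^ k - 1 < M₂ := by
    have h1 : M₂ = y' * n₂ ^ k * n₂ := by rw [hM₂def, pow_succ]; ring
    have h2 : y' * n₂ ^ k * 2 ≤ y' * n₂ ^ k * n₂ := Nat.mul_le_mul_left _ hn₂2
    omega
  obtain ⟨q₂, hq₂⟩ := extract_rep hc₃M₂ hlt₂
  have hc₃p1 : c₃ + 1 = y' * n₂ ^ k * (n₂ * q₂ + 1) := by
    have h3 : c₃ = y' * n₂ ^ k * n₂ * q₂ + (y' * n₂ ^ k - 1) := by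
      rw [hq₂, hM₂def, pow_succ]; ring
    have h4 : y' * n₂ ^ k * (n₂ * q₂ + 1) = y' * n₂ ^ k * n₂ * q₂ + y' * n₂ ^ k := by
      ring
    omega
  have hc₃p1notA : c₃ + 1 ∉ A := fun h => hnot ⟨y', n₂ * q₂ + 1, n₂, hn₂H0,
    by omega, by show (n₂ * q₂ + 1) % n₂ = 1 % n₂; exact Nat.mul_add_mod n₂ q₂ 1,
    hy'A, by rwa [← hc₃p1]⟩
  -- window around c₃
  obtain ⟨a₃, ha₃A, ha₃lb, ha₃ub⟩ := hA (c₃ - l) (by omega)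
  by_cases hgood₃ : ∃ a ∈ A, ∃ e, 2 ≤ e ∧ e ≤ l ∧ (a = c₃ + e ∨ a + e = c₃)
  · obtain ⟨a, ha, e, h1, h2, h3⟩ := hgood₃
    exact good_out hl hLd hQc₃ (by omega) a ha e h1 h2 h3
  · exfalso
    have hne : a₃ ≠ c₃ := fun h => hc₃notA (h ▸ ha₃A)
    have hne1 : a₃ + 1 ≠ c₃ := fun h => hc₃m1notA (by
      have : a₃ = c₃ - 1 := by omega
      exact this ▸ ha₃A)
    have hne2 : a₃ ≠ c₃ + 1 := fun h => hc₃p1notA (h ▸ ha₃A)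
    rcases (by omega : a₃ + 2 ≤ c₃ ∨ c₃ + 2 ≤ a₃) with h | h
    · exact hgood₃ ⟨a₃, ha₃A, c₃ - a₃, by omega, by omega, Or.inr (by omega)⟩
    · exact hgood₃ ⟨a₃, ha₃A, a₃ - c₃, by omega, by omega, Or.inl (by omega)⟩

/-- Triveni triplets of order one exist with respect to
`(2l+1)`-syndetic sets avoiding the configurations `{x, x·n^k·r}`, `n ∈ H₀`. -/
theorem exists_order_one_triveni (k l : ℕ) (hk : 0 < k) (hl : 0 < l)
    (H0 : Set ℕ) (hH0inf : H0.Infinite) (hH0 : PairwisePrimeSet H0)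
    (A : Set ℕ) (hA : SyndeticWith A (2 * l + 1))
    (hnot : ¬∃ x r n : ℕ, n ∈ H0 ∧ 0 < r ∧ r ≡ 1 [MOD n] ∧
      x ∈ A ∧ x * n ^ k * r ∈ A) :
    ∃ d : ℕ, 2 ≤ d ∧ d ≤ l ∧ ∀ h : ℕ, 0 < h → TriveniTriplet A {d} h l := by
  classical
  set L := (Finset.Icc 1 (2 * l + 1)).lcm id with hLdef
  have hLne : L ≠ 0 := by
    intro h
    rw [hLdef, Finset.lcm_eq_zero_iff] at h
    obtain ⟨x, hx, hx0⟩ := h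
    rw [Finset.mem_Icc] at hx
    simp only [id_eq] at hx0
    omega
  have hLpos : 0 < L := Nat.pos_of_ne_zero hLne
  have hL2 : 2 ∣ L := by
    have := Finset.dvd_lcm (f := id) (Finset.mem_Icc.mpr (by omega : 1 ≤ 2 ∧ 2 ≤ 2 * l + 1))
    simpa using this
  have hLd : ∀ e, 2 ≤ e → e ≤ l → e ∣ L := by
    intro e he2 hel
    have := Finset.dvd_lcm (f := id) (Finset.mem_Icc.mpr (by omega : 1 ≤ e ∧ e ≤ 2 * l + 1))
    simpa using this
  have hstep : ∀ P T : ℕ, ∃ db : ℕ × ℕ, 2 ≤ db.1 ∧ db.1 ≤ l ∧ T < db.2 ∧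
      db.1 * db.2 ∈ A ∧ (0 < P → Nat.Coprime db.2 P) := by
    intro P T
    rcases Nat.eq_zero_or_pos P with h | h
    · obtain ⟨d, b, h1, h2, h3, h4, h5⟩ :=
        step hk hl hL2 hLpos hLd hH0inf hH0 hA hnot 1 T one_pos
      exact ⟨(d, b), h1, h2, h3, h4, fun h0 => absurd h (by omega)⟩
    · obtain ⟨d, b, h1, h2, h3, h4, h5⟩ :=
        step hk hl hL2 hLpos hLd hH0inf hH0 hA hnot P T h
      exact ⟨(d, b), h1, h2, h3, h4,
        fun _ => h5.coprime_dvd_right (dvd_mul_left P L)⟩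
  choose f hf1 hf2 hf3 hf4 hf5 using hstep
  obtain ⟨Ps, hPs0, hPss⟩ : ∃ Ps : ℕ → ℕ, Ps 0 = 1 ∧
      ∀ i, Ps (i + 1) = Ps i * (f (Ps i) (Ps i)).2 :=
    ⟨fun i => Nat.rec 1 (fun _ ih => ih * (f ih ih).2) i, rfl, fun _ => rfl⟩
  set dd : ℕ → ℕ := fun i => (f (Ps i) (Ps i)).1 with hdd
  set bb : ℕ → ℕ := fun i => (f (Ps i) (Ps i)).2 with hbb
  have hPpos : ∀ i, 0 < Ps i := by
    intro i
    induction i with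
    | zero => omega
    | succ n ih =>
      rw [hPss n]
      have := hf3 (Ps n) (Ps n)
      exact Nat.mul_pos ih (by omega)
  have hbgt : ∀ i, Ps i < bb i := fun i => hf3 (Ps i) (Ps i)
  have hbcop : ∀ i, Nat.Coprime (bb i) (Ps i) := fun i => hf5 _ _ (hPpos i)
  have hbdvd : ∀ i, bb i ∣ Ps (i + 1) := fun i => ⟨Ps i, by rw [hPss i]; ring⟩
  have hPdvd : ∀ i j, i ≤ j → Ps i ∣ Ps j := by
    intro i j hij
    induction j with
    | zero =>
      have : i = 0 := by omega
      subst this; exact dvd_rfl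
    | succ n ih =>
      rcases Nat.lt_or_ge i (n + 1) with h | h
      · exact (ih (by omega)).trans ⟨(f (Ps n) (Ps n)).2, hPss n⟩
      · have : i = n + 1 := by omega
        subst this; exact dvd_rfl
  have hblt : ∀ i j, i < j → bb i < bb j := by
    intro i j hij
    have h1 : bb i ∣ Ps j := (hbdvd i).trans (hPdvd (i + 1) j hij)
    exact lt_of_le_of_lt (Nat.le_of_dvd (hPpos j) h1) (hbgt j)
  have hbcop2 : ∀ i j, i < j → Nat.Coprime (bb j) (bb i) := by
    intro i j hij
    exact (hbcop j).coprime_dvd_right ((hbdvd i).trans (hPdvd (i + 1) j hij))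
  have hd2 : ∀ i, 2 ≤ dd i := fun i => hf1 _ _
  have hdl : ∀ i, dd i ≤ l := fun i => hf2 _ _
  have hdbA : ∀ i, dd i * bb i ∈ A := fun i => hf4 _ _
  -- pigeonhole
  haveI : Finite ↥(Set.Icc 2 l) := (Set.finite_Icc 2 l).to_subtype
  set F : ℕ → ↥(Set.Icc 2 l) :=
    fun i => ⟨dd i, Set.mem_Icc.mpr ⟨hd2 i, hdl i⟩⟩ with hF
  obtain ⟨y0, hfib⟩ := Finite.exists_infinite_fiber F
  set d₀ := (y0 : ℕ) with hd₀
  have hd₀2 : 2 ≤ d₀ := (Set.mem_Icc.mp y0.2).1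
  have hd₀l : d₀ ≤ l := (Set.mem_Icc.mp y0.2).2
  have hS : {i : ℕ | dd i = d₀}.Infinite := by
    refine Set.Infinite.mono ?_ (Set.infinite_coe_iff.mp hfib)
    intro i hi
    have : F i = y0 := hi
    exact congrArg Subtype.val this
  refine ⟨d₀, hd₀2, hd₀l, fun h hh => ?_⟩
  obtain ⟨tf, htfsub, htfcard⟩ := hS.exists_subset_card_eq h
  have hinj : Set.InjOn bb ↑tf := by
    intro i _ j _ hij
    by_contra hne
    rcases lt_or_gt_of_ne hne with h' | h'
    · exact absurd hij (ne_of_lt (hblt i j h'))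
    · exact absurd hij.symm (ne_of_lt (hblt j i h'))
  refine ⟨?_, fun _ => (↑(tf.image bb) : Set ℕ), fun u hu => ?_, ?_⟩
  · intro u hu
    rw [Set.mem_singleton_iff] at hu; subst hu
    refine ⟨mem_Tset (by omega) (by omega), ?_⟩
    simp only [Set.mem_singleton_iff]
    omega
  · rw [Set.mem_singleton_iff] at hu; subst hu
    refine ⟨⟨?_, ?_⟩, ?_, ?_⟩
    · rintro x hx
      obtain ⟨i, hi, rfl⟩ := Finset.mem_image.mp (Finset.mem_coe.mp hx)
      have := hbgt i
      have := hPpos i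
      omega
    · rintro a ha b hb hab
      obtain ⟨i, hi, rfl⟩ := Finset.mem_image.mp (Finset.mem_coe.mp ha)
      obtain ⟨j, hj, rfl⟩ := Finset.mem_image.mp (Finset.mem_coe.mp hb)
      have hij : i ≠ j := fun hh' => hab (by rw [hh'])
      rcases lt_or_gt_of_ne hij with h' | h'
      · exact (hbcop2 i j h').symm
      · exact hbcop2 j i h'
    · rw [Set.ncard_coe_finset, Finset.card_image_of_injOn hinj, htfcard]
    · rintro x hx
      obtain ⟨i, hi, rfl⟩ := Finset.mem_image.mp (Finset.mem_coe.mp hx)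
      have hdi : dd i = d₀ := htfsub (Finset.mem_coe.mpr hi)
      rw [← hdi]
      exact hdbA i
  · intro u hu v hv huv
    rw [Set.mem_singleton_iff] at hu hv
    exact absurd (hu.trans hv.symm) huv
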